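/- Let A ⊆ ℝ^d be a measurable set, x ∈ ℝ^d, q ∈ (0,1), and suppose μ_x(A) ≤ q. Then for every δ ∈ ℝ^d, μ_{x+δ}(A) ≤ Φ(Φ⁻¹(q) + ‖δ‖₂/σ). -/

import Mathlib

open MeasureTheory ProbabilityTheory
open scoped RealInnerProductSpace
open scoped NNReal ENNReal

/-- `Phi` : cumulative distribution function of the standard real Gaussian N(0,1). -/
noncomputable def Phi : ℝ → ℝ := fun t => ((gaussianReal 0 1) (Set.Iic t)).toReal

/-- `PhiInv` : the standard Gaussian quantile function, inverse of `Phi` on (0,1). -/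
noncomputable def PhiInv : ℝ → ℝ := Function.invFun Phi

/-- `gaussPi d σ x` : the isotropic Gaussian measure on ℝ^d with mean `x` and covariance σ²I,
i.e. the product measure whose i-th factor is the real Gaussian with mean `x i`, variance σ². -/
noncomputable def gaussPi (d : ℕ) (σ : ℝ) (x : EuclideanSpace ℝ (Fin d)) :
    Measure (EuclideanSpace ℝ (Fin d)) :=
  Measure.map (WithLp.toLp 2) (Measure.pi fun i => gaussianReal (x i) ⟨σ ^ 2, sq_nonneg σ⟩)

instance gaussianReal_subtype_isProb (m : ℝ) (v : {r : ℝ // 0 ≤ r}) :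
    IsProbabilityMeasure (gaussianReal m v) :=
  let w : ℝ≥0 := v
  inferInstanceAs (IsProbabilityMeasure (gaussianReal m w))

lemma gaussianReal_singleton (m : ℝ) {v : ℝ≥0} (hv : v ≠ 0) (t : ℝ) :
    gaussianReal m v {t} = 0 := by
  rw [gaussianReal_of_var_ne_zero m hv, withDensity_apply _ (measurableSet_singleton t)]
  exact setLIntegral_measure_zero _ _ (measure_singleton t)

lemma gaussianPDFReal_le (m : ℝ) (t : ℝ) :
    gaussianPDFReal m 1 t ≤ (Real.sqrt (2 * Real.pi))⁻¹ := by
  rw [gaussianPDFReal]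
  have h1 : Real.exp (-(t - m) ^ 2 / (2 * ((1:ℝ≥0):ℝ))) ≤ 1 := by
    rw [Real.exp_le_one_iff]
    have h : (0:ℝ) ≤ (t-m)^2 := sq_nonneg _
    simp only [NNReal.coe_one, mul_one]
    nlinarith
  calc (Real.sqrt (2 * Real.pi * ((1:ℝ≥0):ℝ)))⁻¹ * Real.exp (-(t - m) ^ 2 / (2 * ((1:ℝ≥0):ℝ)))
      ≤ (Real.sqrt (2 * Real.pi * ((1:ℝ≥0):ℝ)))⁻¹ * 1 := by
        apply mul_le_mul_of_nonneg_left h1 (by positivity)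
    _ = (Real.sqrt (2 * Real.pi))⁻¹ := by simp

lemma Phi_split {s t : ℝ} (hst : s ≤ t) :
    Phi t = Phi s + (gaussianReal 0 1 (Set.Ioc s t)).toReal := by
  have hsplit : gaussianReal 0 1 (Set.Iic t) =
      gaussianReal 0 1 (Set.Iic s) + gaussianReal 0 1 (Set.Ioc s t) := by
    rw [← measure_union (Set.Iic_disjoint_Ioc le_rfl) measurableSet_Ioc,
      Set.Iic_union_Ioc_eq_Iic hst]
  rw [Phi, Phi, hsplit, ENNReal.toReal_add (measure_ne_top _ _) (measure_ne_top _ _)]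

lemma Phi_mono : Monotone Phi := by
  intro s t hst
  have := Phi_split hst
  have h2 : 0 ≤ (gaussianReal 0 1 (Set.Ioc s t)).toReal := ENNReal.toReal_nonneg
  linarith

lemma Phi_sub_le {s t : ℝ} (hst : s ≤ t) :
    Phi t - Phi s ≤ (Real.sqrt (2 * Real.pi))⁻¹ * (t - s) := by
  have hIoc : gaussianReal 0 1 (Set.Ioc s t)
      ≤ ENNReal.ofReal ((Real.sqrt (2 * Real.pi))⁻¹ * (t - s)) := by
    rw [gaussianReal_of_var_ne_zero 0 one_ne_zero, withDensity_apply _ measurableSet_Ioc]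
    calc ∫⁻ y in Set.Ioc s t, gaussianPDF 0 1 y
        ≤ ∫⁻ _ in Set.Ioc s t, ENNReal.ofReal ((Real.sqrt (2 * Real.pi))⁻¹) := by
          apply setLIntegral_mono measurable_const
          intro y _
          exact ENNReal.ofReal_le_ofReal (gaussianPDFReal_le 0 y)
      _ = ENNReal.ofReal ((Real.sqrt (2 * Real.pi))⁻¹) * volume (Set.Ioc s t) := by
          rw [setLIntegral_const]
      _ ≤ ENNReal.ofReal ((Real.sqrt (2 * Real.pi))⁻¹ * (t - s)) := by
          rw [Real.volume_Ioc, ENNReal.ofReal_mul (by positivity)]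
  have h := ENNReal.toReal_le_of_le_ofReal
    (mul_nonneg (by positivity) (by linarith)) hIoc
  have := Phi_split hst
  linarith

lemma Phi_continuous : Continuous Phi := by
  apply LipschitzWith.continuous (K := ⟨(Real.sqrt (2 * Real.pi))⁻¹, by positivity⟩)
  apply LipschitzWith.of_dist_le_mul
  intro s t
  have key : ∀ a b : ℝ, a ≤ b → dist (Phi a) (Phi b) ≤ (Real.sqrt (2 * Real.pi))⁻¹ * dist a b := by
    intro a b hab
    rw [Real.dist_eq, Real.dist_eq, abs_of_nonpos (by linarith [Phi_mono hab]),
      abs_of_nonpos (by linarith)]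
    have := Phi_sub_le hab
    push_cast
    linarith
  rcases le_total s t with hst | hst
  · exact key s t hst
  · rw [dist_comm, dist_comm s t]; exact key t s hst


lemma gaussianReal_map_affine (m : ℝ) {v : ℝ≥0} (hv : v ≠ 0) :
    gaussianReal m v = (gaussianReal 0 1).map (fun y => Real.sqrt v * y + m) := by
  have h1 : (gaussianReal 0 1).map (fun y => Real.sqrt v * y) = gaussianReal 0 v := by
    rw [show (fun y => Real.sqrt v * y) = (Real.sqrt v * ·) by rfl,
      gaussianReal_map_const_mul (Real.sqrt v)]
    congr 1
    · ring
    · ext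
      simp [Real.sq_sqrt v.2]
  rw [show (fun y => Real.sqrt v * y + m) = ((· + m) ∘ fun y => Real.sqrt v * y) from rfl,
    ← Measure.map_map (measurable_id'.add_const m) (measurable_const_mul _), h1,
    gaussianReal_map_add_const m, zero_add]

lemma gaussianReal_Iic (m : ℝ) {v : ℝ≥0} (hv : v ≠ 0) (t : ℝ) :
    (gaussianReal m v (Set.Iic t)).toReal = Phi ((t - m) / Real.sqrt v) := by
  have hs : (0:ℝ) < Real.sqrt v := Real.sqrt_pos.mpr (by exact_mod_cast pos_iff_ne_zero.mpr hv)
  rw [gaussianReal_map_affine m hv,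
    Measure.map_apply (by fun_prop) measurableSet_Iic]
  congr 2
  ext y
  simp only [Set.mem_preimage, Set.mem_Iic]
  rw [le_div_iff₀ hs]
  constructor <;> intro h <;> nlinarith

lemma gaussianReal_Ici (m : ℝ) {v : ℝ≥0} (hv : v ≠ 0) (s : ℝ) :
    (gaussianReal m v (Set.Ici s)).toReal = 1 - (gaussianReal m v (Set.Iic s)).toReal := by
  have h1 : gaussianReal m v (Set.Ici s) = gaussianReal m v (Set.Ioi s) :=
    (measure_congr (MeasureTheory.Ioi_ae_eq_Ici' (gaussianReal_singleton m hv s))).symm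
  rw [h1, ← Set.compl_Iic, measure_compl measurableSet_Iic (measure_ne_top _ _),
    measure_univ, ENNReal.toReal_sub_of_le prob_le_one ENNReal.one_ne_top]
  simp

lemma Phi_neg (a : ℝ) : Phi (-a) = 1 - Phi a := by
  have hmap : (gaussianReal 0 1).map (fun y => -y) = gaussianReal 0 1 := by
    rw [show (fun y : ℝ => -y) = ((-1 : ℝ) * ·) by funext y; ring,
      gaussianReal_map_const_mul (-1 : ℝ)]
    norm_num
  have : gaussianReal 0 1 (Set.Iic (-a)) = gaussianReal 0 1 (Set.Ici a) := by
    conv_lhs => rw [← hmap, Measure.map_apply measurable_neg measurableSet_Iic]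
    congr 1
    ext y
    simp
  rw [Phi, this]
  have := gaussianReal_Ici 0 one_ne_zero a
  rw [this]
  rfl


lemma gaussianReal_Ioc_pos {s t : ℝ} (hst : s < t) :
    0 < gaussianReal 0 1 (Set.Ioc s t) := by
  rw [gaussianReal_of_var_ne_zero 0 one_ne_zero, withDensity_apply _ measurableSet_Ioc]
  rw [← lintegral_indicator measurableSet_Ioc] at *
  rw [lintegral_indicator measurableSet_Ioc]
  rw [lintegral_pos_iff_support (measurable_gaussianPDF 0 1)]
  have : Function.support (gaussianPDF 0 1) = Set.univ := by
    ext y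
    simp only [Function.mem_support, Set.mem_univ, iff_true]
    exact (gaussianPDF_pos 0 one_ne_zero y).ne'
  rw [this]
  simp only [Measure.restrict_apply MeasurableSet.univ, Set.univ_inter, Real.volume_Ioc]
  exact ENNReal.ofReal_pos.mpr (by linarith)

lemma Phi_strictMono : StrictMono Phi := by
  intro s t hst
  have h := Phi_split hst.le
  have h2 : 0 < (gaussianReal 0 1 (Set.Ioc s t)).toReal :=
    ENNReal.toReal_pos (gaussianReal_Ioc_pos hst).ne' (measure_ne_top _ _)
  linarith

lemma Phi_tendsto_atTop : Filter.Tendsto Phi Filter.atTop (nhds 1) := by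
  have h1 := tendsto_measure_Iic_atTop (gaussianReal 0 1)
  rw [measure_univ] at h1
  have h2 := (ENNReal.tendsto_toReal ENNReal.one_ne_top).comp h1
  show Filter.Tendsto (fun t => ((gaussianReal 0 1) (Set.Iic t)).toReal) Filter.atTop (nhds 1)
  simpa [Function.comp_def] using h2

lemma Phi_tendsto_atBot : Filter.Tendsto Phi Filter.atBot (nhds 0) := by
  have : Phi = (fun t => 1 - Phi (-t)) := by
    funext t
    rw [← Phi_neg, neg_neg]
  rw [this]
  have h := (Phi_tendsto_atTop.comp Filter.tendsto_neg_atBot_atTop)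
  have h2 := Filter.Tendsto.const_sub (1:ℝ) h
  simpa [Function.comp] using h2

lemma Phi_surj {q : ℝ} (hq : q ∈ Set.Ioo (0:ℝ) 1) : ∃ t, Phi t = q := by
  obtain ⟨a, ha⟩ := (Phi_tendsto_atBot.eventually (eventually_lt_nhds hq.1)).exists
  obtain ⟨b, hb⟩ := (Phi_tendsto_atTop.eventually (eventually_gt_nhds hq.2)).exists
  rcases le_total a b with hab | hab
  · have := intermediate_value_Icc hab Phi_continuous.continuousOn
    obtain ⟨t, _, ht⟩ := this ⟨ha.le, hb.le⟩
    exact ⟨t, ht⟩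
  · have := intermediate_value_Icc' hab Phi_continuous.continuousOn
    obtain ⟨t, _, ht⟩ := this ⟨ha.le, hb.le⟩
    exact ⟨t, ht⟩

lemma Phi_PhiInv {q : ℝ} (hq : q ∈ Set.Ioo (0:ℝ) 1) : Phi (PhiInv q) = q :=
  Function.invFun_eq (Phi_surj hq)

lemma lintegral_fin_pi_prod : ∀ (n : ℕ) (ν : Fin n → Measure ℝ)
    (_ : ∀ i, IsProbabilityMeasure (ν i)) (g : Fin n → ℝ → ℝ≥0∞)
    (_ : ∀ i, Measurable (g i)),
    ∫⁻ y, ∏ i, g i (y i) ∂Measure.pi ν = ∏ i, ∫⁻ t, g i t ∂ν i := by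
  intro n
  induction n with
  | zero =>
    intro ν hν g hg
    simp only [Finset.univ_eq_empty, Finset.prod_empty]
    haveI := hν
    haveI : IsProbabilityMeasure (Measure.pi ν) := by infer_instance
    simp [lintegral_const]
  | succ n ih =>
    intro ν hν g hg
    haveI := hν
    have hmp := measurePreserving_piFinSuccAbove ν 0
    set e := MeasurableEquiv.piFinSuccAbove (fun _ : Fin (n+1) => ℝ) 0 with he
    have hGmeas : Measurable (fun b : Fin n → ℝ => ∏ j : Fin n, g (Fin.succ j) (b j)) :=
      Finset.measurable_prod _ fun j _ => (hg _).comp (measurable_pi_apply j)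
    have key : ∫⁻ y, ∏ i, g i (y i) ∂Measure.pi ν
        = ∫⁻ p : ℝ × (Fin n → ℝ), g 0 p.1 * ∏ j : Fin n, g (Fin.succ j) (p.2 j)
            ∂((ν 0).prod (Measure.pi fun j => ν (Fin.succAbove 0 j))) := by
      rw [← hmp.map_eq, lintegral_map]
      · apply lintegral_congr
        intro y
        rw [Fin.prod_univ_succ]
        have h1 : (e y).1 = y 0 := rfl
        have h2 : ∀ j : Fin n, (e y).2 j = y (Fin.succ j) := by
          intro j
          show y (Fin.succAbove 0 j) = y (Fin.succ j)
          rw [Fin.zero_succAbove]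
        rw [h1]
        congr 1
      · exact ((hg 0).comp measurable_fst).mul (hGmeas.comp measurable_snd)
      · exact e.measurable
    rw [key]
    have := lintegral_prod_mul (μ := ν 0) (ν := Measure.pi fun j => ν (Fin.succAbove 0 j))
      (f := g 0) (g := fun b => ∏ j : Fin n, g (Fin.succ j) (b j))
      ((hg 0).aemeasurable) hGmeas.aemeasurable
    rw [this, ih _ (fun j => hν _) _ (fun j => hg _), Fin.prod_univ_succ]
    congr 1

lemma gaussianPDFReal_conv_eq {v w : ℝ≥0} (hv : v ≠ 0) (hw : w ≠ 0) (t x : ℝ) :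
    gaussianPDFReal 0 v x * gaussianPDFReal 0 w (t - x)
      = gaussianPDFReal 0 (v + w) t
        * gaussianPDFReal ((v:ℝ) * t / ((v:ℝ) + w)) (v * w / (v + w)) x := by
  have ha : (0:ℝ) < v := lt_of_le_of_ne v.2 (by exact_mod_cast (Ne.symm hv))
  have hb : (0:ℝ) < w := lt_of_le_of_ne w.2 (by exact_mod_cast (Ne.symm hw))
  have hab : (0:ℝ) < (v:ℝ) + w := by linarith
  simp only [gaussianPDFReal]
  have hcoe1 : ((v + w : ℝ≥0) : ℝ) = (v:ℝ) + w := by push_cast; ring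
  have hcoe2 : ((v * w / (v + w) : ℝ≥0) : ℝ) = (v:ℝ) * w / ((v:ℝ) + w) := by
    push_cast; ring
  rw [hcoe1, hcoe2]
  rw [mul_mul_mul_comm, mul_mul_mul_comm (Real.sqrt (2 * Real.pi * ((v:ℝ) + w)))⁻¹]
  congr 1
  · rw [← mul_inv, ← mul_inv, ← Real.sqrt_mul (by positivity), ← Real.sqrt_mul (by positivity)]
    congr 2
    field_simp
  · rw [← Real.exp_add, ← Real.exp_add]
    congr 1
    field_simp
    ring

lemma lintegral_gaussianPDF_conv {v w : ℝ≥0} (hv : v ≠ 0) (hw : w ≠ 0) (t : ℝ) :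
    ∫⁻ x, gaussianPDF 0 v x * gaussianPDF 0 w (t - x) = gaussianPDF 0 (v + w) t := by
  have hu : v * w / (v + w) ≠ 0 := by
    apply div_ne_zero (mul_ne_zero hv hw)
    simp [hv, hw]
  calc ∫⁻ x, gaussianPDF 0 v x * gaussianPDF 0 w (t - x)
      = ∫⁻ x, gaussianPDF 0 (v + w) t
          * gaussianPDF ((v:ℝ) * t / ((v:ℝ) + w)) (v * w / (v + w)) x := by
        apply lintegral_congr
        intro x
        rw [gaussianPDF, gaussianPDF, ← ENNReal.ofReal_mul (gaussianPDFReal_nonneg _ _ _),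
          gaussianPDFReal_conv_eq hv hw t x, gaussianPDF, gaussianPDF,
          ENNReal.ofReal_mul (gaussianPDFReal_nonneg _ _ _)]
    _ = gaussianPDF 0 (v + w) t := by
        rw [lintegral_const_mul _ (measurable_gaussianPDF _ _),
          lintegral_gaussianPDF_eq_one _ hu, mul_one]

lemma gaussian_conv (v w : ℝ≥0) :
    ((gaussianReal 0 v).prod (gaussianReal 0 w)).map (fun p : ℝ × ℝ => p.1 + p.2)
      = gaussianReal 0 (v + w) := by
  by_cases hv : v = 0
  · subst hv
    rw [gaussianReal_zero_var, Measure.dirac_prod,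
      Measure.map_map (by fun_prop) measurable_prodMk_left]
    have : ((fun p : ℝ × ℝ => p.1 + p.2) ∘ Prod.mk (0:ℝ)) = ((0:ℝ) + ·) := rfl
    rw [this, gaussianReal_map_const_add, zero_add, zero_add]
  by_cases hw : w = 0
  · subst hw
    rw [gaussianReal_zero_var, Measure.prod_dirac,
      Measure.map_map (by fun_prop) (by fun_prop)]
    have : ((fun p : ℝ × ℝ => p.1 + p.2) ∘ (fun x : ℝ => (x, (0:ℝ)))) = (· + (0:ℝ)) := rfl
    rw [this, gaussianReal_map_add_const, zero_add, add_zero]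
  ext s hs
  rw [Measure.map_apply (by fun_prop) hs,
    Measure.prod_apply ((measurable_add (by exact hs)))]
  have hind : Measurable (s.indicator (fun _ => (1:ℝ≥0∞))) :=
    measurable_const.indicator hs
  have hpdfw := measurable_gaussianPDF 0 w
  have hpdfv := measurable_gaussianPDF 0 v
  have hsub : Measurable (fun p : ℝ × ℝ => p.2 - p.1) := by fun_prop
  have hFmeas : Measurable (fun p : ℝ × ℝ =>
      s.indicator (fun _ => (1:ℝ≥0∞)) p.2 * gaussianPDF 0 w (p.2 - p.1)) :=
    (hind.comp measurable_snd).mul (hpdfw.comp hsub)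
  have hinner : ∀ x : ℝ, gaussianReal 0 w (Prod.mk x ⁻¹' ((fun p : ℝ × ℝ => p.1 + p.2) ⁻¹' s))
      = ∫⁻ u, s.indicator (fun _ => (1:ℝ≥0∞)) u * gaussianPDF 0 w (u - x) := by
    intro x
    have hB : MeasurableSet ((fun y : ℝ => x + y) ⁻¹' s) := (measurable_const_add x) hs
    have h1 : (Prod.mk x ⁻¹' ((fun p : ℝ × ℝ => p.1 + p.2) ⁻¹' s))
        = (fun y : ℝ => x + y) ⁻¹' s := rfl
    rw [h1, gaussianReal_of_var_ne_zero 0 hw, withDensity_apply _ hB,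
      ← lintegral_indicator hB]
    have h2 := lintegral_add_right_eq_self
      (μ := (volume : Measure ℝ))
      (f := ((fun y : ℝ => x + y) ⁻¹' s).indicator (gaussianPDF 0 w)) (-x)
    rw [← h2]
    apply lintegral_congr
    intro u
    have h3 : x + (u + -x) = u := by ring
    have h4 : u + -x = u - x := by ring
    simp only [Set.indicator, Set.mem_preimage, h3, h4]
    by_cases hu : u ∈ s <;> simp [hu]
  simp_rw [hinner]
  rw [gaussianReal_of_var_ne_zero 0 hv,
    lintegral_withDensity_eq_lintegral_mul _ hpdfv
      (Measurable.lintegral_prod_right' (f := fun p : ℝ × ℝ =>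
        s.indicator (fun _ => (1:ℝ≥0∞)) p.2 * gaussianPDF 0 w (p.2 - p.1)) hFmeas)]
  have hstep3 : ∀ x : ℝ, (gaussianPDF 0 v * fun x =>
        ∫⁻ u, s.indicator (fun _ => (1:ℝ≥0∞)) u * gaussianPDF 0 w (u - x)) x
      = ∫⁻ u, s.indicator (fun _ => (1:ℝ≥0∞)) u
          * (gaussianPDF 0 v x * gaussianPDF 0 w (u - x)) := by
    intro x
    simp only [Pi.mul_apply]
    have hmeas : Measurable (fun u : ℝ =>
        s.indicator (fun _ => (1:ℝ≥0∞)) u * gaussianPDF 0 w (u - x)) := by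
      exact hind.mul (hpdfw.comp (by fun_prop))
    rw [← lintegral_const_mul _ hmeas]
    apply lintegral_congr
    intro u
    ring
  simp_rw [hstep3]
  rw [lintegral_lintegral_swap]
  swap
  · apply Measurable.aemeasurable
    exact (hind.comp measurable_snd).mul ((hpdfv.comp measurable_fst).mul (hpdfw.comp hsub))
  have hstep5 : ∀ u : ℝ, (∫⁻ x, s.indicator (fun _ => (1:ℝ≥0∞)) u
        * (gaussianPDF 0 v x * gaussianPDF 0 w (u - x)))
      = s.indicator (fun _ => (1:ℝ≥0∞)) u * gaussianPDF 0 (v + w) u := by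
    intro u
    have hmeas : Measurable (fun x : ℝ => gaussianPDF 0 v x * gaussianPDF 0 w (u - x)) := by
      exact hpdfv.mul (hpdfw.comp (by fun_prop))
    rw [lintegral_const_mul _ hmeas, lintegral_gaussianPDF_conv hv hw u]
  simp_rw [hstep5]
  rw [gaussianReal_of_var_ne_zero 0 (by simp [hv, hw]), withDensity_apply _ hs,
    ← lintegral_indicator hs]
  apply lintegral_congr
  intro u
  simp only [Set.indicator]
  by_cases hu : u ∈ s <;> simp [hu]

lemma map_sum_gaussian : ∀ (n : ℕ) (ν : Fin n → Measure ℝ)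
    (_ : ∀ i, IsProbabilityMeasure (ν i)) (f : Fin n → ℝ → ℝ)
    (_ : ∀ i, Measurable (f i)) (w : Fin n → ℝ≥0)
    (_ : ∀ i, (ν i).map (f i) = gaussianReal 0 (w i)),
    (Measure.pi ν).map (fun y => ∑ i, f i (y i)) = gaussianReal 0 (∑ i, w i) := by
  intro n
  induction n with
  | zero =>
    intro ν hν f hf w h
    haveI := hν
    haveI : IsProbabilityMeasure (Measure.pi ν) := by infer_instance
    simp only [Finset.univ_eq_empty, Finset.sum_empty]
    rw [Measure.map_const, measure_univ, one_smul, ← gaussianReal_zero_var 0]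
  | succ n ih =>
    intro ν hν f hf w h
    haveI := hν
    have hmp := measurePreserving_piFinSuccAbove ν 0
    set e := MeasurableEquiv.piFinSuccAbove (fun _ : Fin (n+1) => ℝ) 0 with he
    set νrest := Measure.pi fun j => ν (Fin.succAbove 0 j) with hνrest
    have hGmeas : Measurable (fun b : Fin n → ℝ => ∑ j : Fin n, f (Fin.succAbove 0 j) (b j)) :=
      Finset.measurable_sum _ fun j _ => (hf _).comp (measurable_pi_apply j)
    have hcomp : (fun y : Fin (n+1) → ℝ => ∑ i, f i (y i))
        = (fun p : ℝ × (Fin n → ℝ) => f 0 p.1 + ∑ j : Fin n, f (Fin.succAbove 0 j) (p.2 j)) ∘ e := by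
      funext y
      rw [Function.comp_apply, Fin.sum_univ_succ]
      congr 1
    have hbig : Measurable (fun p : ℝ × (Fin n → ℝ) =>
        f 0 p.1 + ∑ j : Fin n, f (Fin.succAbove 0 j) (p.2 j)) :=
      ((hf 0).comp measurable_fst).add (hGmeas.comp measurable_snd)
    rw [hcomp, ← Measure.map_map hbig e.measurable, hmp.map_eq]
    have hsplit : (fun p : ℝ × (Fin n → ℝ) =>
        f 0 p.1 + ∑ j : Fin n, f (Fin.succAbove 0 j) (p.2 j))
        = (fun q : ℝ × ℝ => q.1 + q.2)
          ∘ (Prod.map (f 0) (fun b : Fin n → ℝ => ∑ j : Fin n, f (Fin.succAbove 0 j) (b j))) := rfl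
    rw [hsplit, ← Measure.map_map (by fun_prop) ((hf 0).prodMap hGmeas),
      ← Measure.map_prod_map _ _ (hf 0) hGmeas, h 0,
      ih _ (fun j => hν _) _ (fun j => hf _) _ (fun j => h _),
      gaussian_conv, Fin.sum_univ_succ]
    congr 1

lemma gaussianReal_shift_withDensity (m c : ℝ) {v : ℝ≥0} (hv : v ≠ 0) :
    gaussianReal (m + c) v = (gaussianReal m v).withDensity
      (fun t => ENNReal.ofReal (Real.exp (c * (t - m) / v - c ^ 2 / (2 * v)))) := by
  have hvpos : (0:ℝ) < v := lt_of_le_of_ne v.2 (by exact_mod_cast (Ne.symm hv))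
  rw [gaussianReal_of_var_ne_zero _ hv, gaussianReal_of_var_ne_zero _ hv,
    ← withDensity_mul _ (measurable_gaussianPDF m v) (by fun_prop)]
  congr 1
  funext t
  simp only [Pi.mul_apply, gaussianPDF, gaussianPDFReal]
  rw [← ENNReal.ofReal_mul (by positivity)]
  congr 1
  simp only [mul_assoc, ← Real.exp_add]
  congr 2
  field_simp
  ring

lemma pi_gauss_shift {d : ℕ} {σ : ℝ} (hσ : 0 < σ) (x δ : Fin d → ℝ) :
    Measure.pi (fun i => gaussianReal (x i + δ i) ⟨σ ^ 2, sq_nonneg σ⟩)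
      = (Measure.pi fun i => gaussianReal (x i) ⟨σ ^ 2, sq_nonneg σ⟩).withDensity
        (fun y => ENNReal.ofReal (Real.exp
          (∑ i, (δ i * (y i - x i) / σ ^ 2 - δ i ^ 2 / (2 * σ ^ 2))))) := by
  have hv : (⟨σ ^ 2, sq_nonneg σ⟩ : ℝ≥0) ≠ 0 := by
    intro hcon
    have : σ ^ 2 = 0 := congrArg NNReal.toReal hcon
    nlinarith
  set ℓ : Fin d → ℝ → ℝ≥0∞ := fun i t =>
    ENNReal.ofReal (Real.exp (δ i * (t - x i) / σ ^ 2 - δ i ^ 2 / (2 * σ ^ 2))) with hℓ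
  have hℓmeas : ∀ i, Measurable (ℓ i) := by intro i; fun_prop
  apply Measure.pi_eq
  intro s hs
  rw [withDensity_apply _ (MeasurableSet.univ_pi hs), ← lintegral_indicator (MeasurableSet.univ_pi hs)]
  have hpt : ∀ y : Fin d → ℝ, (Set.univ.pi s).indicator (fun y =>
      ENNReal.ofReal (Real.exp (∑ i, (δ i * (y i - x i) / σ ^ 2 - δ i ^ 2 / (2 * σ ^ 2))))) y
      = ∏ i, (s i).indicator (ℓ i) (y i) := by
    intro y
    by_cases hy : y ∈ Set.univ.pi s
    · rw [Set.indicator_of_mem hy, Real.exp_sum,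
        ENNReal.ofReal_prod_of_nonneg (fun i _ => (Real.exp_pos _).le)]
      apply Finset.prod_congr rfl
      intro i _
      rw [Set.indicator_of_mem (hy i (Set.mem_univ i))]
    · rw [Set.indicator_of_notMem hy]
      rw [Set.mem_univ_pi] at hy
      push_neg at hy
      obtain ⟨i, hi⟩ := hy
      symm
      apply Finset.prod_eq_zero (Finset.mem_univ i)
      rw [Set.indicator_of_notMem hi]
  rw [lintegral_congr hpt,
    lintegral_fin_pi_prod d _ (fun i => by infer_instance) _
      (fun i => (hℓmeas i).indicator (hs i))]
  apply Finset.prod_congr rfl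
  intro i _
  have hgs := gaussianReal_shift_withDensity (x i) (δ i) hv
  change gaussianReal (x i + δ i) ⟨σ ^ 2, sq_nonneg σ⟩ = (gaussianReal (x i) ⟨σ ^ 2, sq_nonneg σ⟩).withDensity
    (fun t => ENNReal.ofReal (Real.exp (δ i * (t - x i) / σ ^ 2 - δ i ^ 2 / (2 * σ ^ 2)))) at hgs
  rw [lintegral_indicator (hs i), ← withDensity_apply _ (hs i), ← hgs]

lemma map_shift_gauss {d : ℕ} {σ : ℝ} (hσ : 0 < σ) (x δ : Fin d → ℝ) :
    (Measure.pi fun i => gaussianReal (x i) ⟨σ ^ 2, sq_nonneg σ⟩).map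
        (fun y => ∑ i, δ i * (y i - x i))
      = gaussianReal 0 (∑ i, (⟨δ i ^ 2, sq_nonneg _⟩ : ℝ≥0) * (⟨σ ^ 2, sq_nonneg σ⟩ : ℝ≥0)) := by
  have hco : ∀ i, (gaussianReal (x i) (⟨σ ^ 2, sq_nonneg σ⟩ : ℝ≥0)).map
      (fun t : ℝ => δ i * (t - x i))
      = gaussianReal 0 ((⟨δ i ^ 2, sq_nonneg _⟩ : ℝ≥0) * (⟨σ ^ 2, sq_nonneg σ⟩ : ℝ≥0)) := by
    intro i
    have hcomp : (fun t : ℝ => δ i * (t - x i)) = ((δ i * ·) ∘ (· + (-(x i)))) := by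
      funext t
      simp [sub_eq_add_neg]
    rw [hcomp, ← Measure.map_map (measurable_const_mul _) (measurable_add_const _),
      gaussianReal_map_add_const (v := ⟨σ ^ 2, sq_nonneg σ⟩), add_neg_cancel,
      gaussianReal_map_const_mul (v := ⟨σ ^ 2, sq_nonneg σ⟩), mul_zero]
    rfl
  exact map_sum_gaussian d _ (fun i => by infer_instance)
    (fun i t => δ i * (t - x i)) (fun i => by fun_prop) _ hco

lemma np_core {α : Type*} [MeasurableSpace α] (μ : Measure α) [IsFiniteMeasure μ]
    {A H : Set α} (hA : MeasurableSet A) (hH : MeasurableSet H)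
    (hμ : μ A ≤ μ H) (dens : α → ℝ≥0∞) (hdens : Measurable dens)
    (c : ℝ≥0∞) (h1 : ∀ y ∈ H, c ≤ dens y) (h2 : ∀ y ∉ H, dens y ≤ c) :
    ∫⁻ y in A, dens y ∂μ ≤ ∫⁻ y in H, dens y ∂μ := by
  have hd1 : Disjoint (A ∩ H) (A \ H) := by
    rw [Set.disjoint_left]
    rintro y ⟨-, hy⟩ ⟨-, hy'⟩
    exact hy' hy
  have hd2 : Disjoint (H ∩ A) (H \ A) := by
    rw [Set.disjoint_left]
    rintro y ⟨-, hy⟩ ⟨-, hy'⟩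
    exact hy' hy
  have hsplitA : ∫⁻ y in A, dens y ∂μ
      = ∫⁻ y in A ∩ H, dens y ∂μ + ∫⁻ y in A \ H, dens y ∂μ := by
    rw [← lintegral_union (hA.diff hH) hd1, Set.inter_union_diff]
  have hsplitH : ∫⁻ y in H, dens y ∂μ
      = ∫⁻ y in H ∩ A, dens y ∂μ + ∫⁻ y in H \ A, dens y ∂μ := by
    rw [← lintegral_union (hH.diff hA) hd2, Set.inter_union_diff]
  have hmeas_le : μ (A \ H) ≤ μ (H \ A) := by
    have h3 : μ (A ∩ H) + μ (A \ H) = μ A := measure_inter_add_diff A hH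
    have h4 : μ (H ∩ A) + μ (H \ A) = μ H := measure_inter_add_diff H hA
    rw [Set.inter_comm] at h4
    have h5 : μ (A ∩ H) + μ (A \ H) ≤ μ (A ∩ H) + μ (H \ A) := by
      rw [h3, h4]; exact hμ
    exact (ENNReal.add_le_add_iff_left (measure_ne_top μ _)).mp h5
  have hb1 : ∫⁻ y in A \ H, dens y ∂μ ≤ c * μ (A \ H) := by
    calc ∫⁻ y in A \ H, dens y ∂μ ≤ ∫⁻ _ in A \ H, c ∂μ :=
          setLIntegral_mono measurable_const fun y hy => h2 y hy.2
      _ = c * μ (A \ H) := setLIntegral_const _ _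
  have hb2 : c * μ (H \ A) ≤ ∫⁻ y in H \ A, dens y ∂μ := by
    calc c * μ (H \ A) = ∫⁻ _ in H \ A, c ∂μ := (setLIntegral_const _ _).symm
      _ ≤ ∫⁻ y in H \ A, dens y ∂μ :=
          setLIntegral_mono hdens fun y hy => h1 y hy.1
  calc ∫⁻ y in A, dens y ∂μ
      = ∫⁻ y in A ∩ H, dens y ∂μ + ∫⁻ y in A \ H, dens y ∂μ := hsplitA
    _ ≤ ∫⁻ y in A ∩ H, dens y ∂μ + c * μ (H \ A) :=
        add_le_add_right (hb1.trans (mul_le_mul_right hmeas_le c)) _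
    _ ≤ ∫⁻ y in A ∩ H, dens y ∂μ + ∫⁻ y in H \ A, dens y ∂μ := add_le_add_right hb2 _
    _ = ∫⁻ y in H, dens y ∂μ := by rw [hsplitH, Set.inter_comm]



theorem aux_shift {d : ℕ} {σ : ℝ} (hσ : 0 < σ) (A : Set (Fin d → ℝ)) (hA : MeasurableSet A)
    (x : Fin d → ℝ) (q : ℝ) (hq : q ∈ Set.Ioo (0 : ℝ) 1)
    (h : ((Measure.pi fun i => gaussianReal (x i) ⟨σ ^ 2, sq_nonneg σ⟩) A).toReal ≤ q)
    (δ : Fin d → ℝ) (nδ : ℝ) (hnδ : 0 < nδ) (hnδ2 : nδ ^ 2 = ∑ i, δ i ^ 2) :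
    ((Measure.pi fun i => gaussianReal (x i + δ i) ⟨σ ^ 2, sq_nonneg σ⟩) A).toReal
      ≤ Phi (PhiInv q + nδ / σ) := by
  set μx : Measure (Fin d → ℝ) := Measure.pi fun i => gaussianReal (x i) ⟨σ ^ 2, sq_nonneg σ⟩
    with hμx
  set μxδ : Measure (Fin d → ℝ) :=
    Measure.pi fun i => gaussianReal (x i + δ i) ⟨σ ^ 2, sq_nonneg σ⟩ with hμxδ
  haveI : IsProbabilityMeasure μx := by rw [hμx]; infer_instance
  haveI : IsProbabilityMeasure μxδ := by rw [hμxδ]; infer_instance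
  set N2 : ℝ := ∑ i, δ i ^ 2 with hN2
  have hN2pos : 0 < N2 := by rw [← hnδ2]; positivity
  set W : ℝ≥0 := ∑ i, (⟨δ i ^ 2, sq_nonneg _⟩ : ℝ≥0) * (⟨σ ^ 2, sq_nonneg σ⟩ : ℝ≥0) with hW
  have hWcoe : (W : ℝ) = N2 * σ ^ 2 := by
    rw [hW, hN2, Finset.sum_mul]
    exact (NNReal.coe_sum _ _).trans (Finset.sum_congr rfl fun i _ => rfl)
  have hWne : W ≠ 0 := by
    intro hcon
    have h0 : (W : ℝ) = 0 := by rw [hcon]; simp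
    rw [hWcoe] at h0
    have : (0:ℝ) < N2 * σ ^ 2 := by positivity
    linarith
  have hsqrtW : Real.sqrt W = nδ * σ := by
    rw [hWcoe, ← hnδ2, show nδ ^ 2 * σ ^ 2 = (nδ * σ) ^ 2 by ring,
      Real.sqrt_sq (by positivity)]
  set t₀ : ℝ := PhiInv q with ht₀
  set r : ℝ := -(nδ * σ * t₀) with hr
  set S : (Fin d → ℝ) → ℝ := fun y => ∑ i, δ i * (y i - x i) with hS
  have hSmeas : Measurable S :=
    Finset.measurable_sum _ fun i _ => by
      fun_prop
  set H : Set (Fin d → ℝ) := S ⁻¹' (Set.Ici r) with hH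
  have hHmeas : MeasurableSet H := hSmeas measurableSet_Ici
  have hmapS : μx.map S = gaussianReal 0 W := map_shift_gauss hσ x δ
  have hxH : (μx H).toReal = q := by
    rw [hH, ← Measure.map_apply hSmeas measurableSet_Ici, hmapS,
      gaussianReal_Ici 0 hWne r, gaussianReal_Iic 0 hWne r, sub_zero, hsqrtW]
    have harg : r / (nδ * σ) = -t₀ := by
      rw [hr]
      field_simp
    rw [harg, Phi_neg, ht₀, Phi_PhiInv hq]
    ring
  have hAle : μx A ≤ μx H := by
    apply (ENNReal.toReal_le_toReal (measure_ne_top _ _) (measure_ne_top _ _)).mp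
    rw [hxH]
    exact h
  set dens : (Fin d → ℝ) → ℝ≥0∞ := fun y =>
    ENNReal.ofReal (Real.exp (∑ i, (δ i * (y i - x i) / σ ^ 2 - δ i ^ 2 / (2 * σ ^ 2))))
    with hdens
  have hsum : Measurable (fun y : Fin d → ℝ =>
      ∑ i, (δ i * (y i - x i) / σ ^ 2 - δ i ^ 2 / (2 * σ ^ 2))) :=
    Finset.measurable_sum _ fun i _ =>
      by fun_prop
  have hdensmeas : Measurable dens :=
    ENNReal.measurable_ofReal.comp (Real.measurable_exp.comp hsum)
  have hdenseq : ∀ y, dens y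
      = ENNReal.ofReal (Real.exp (S y / σ ^ 2 - N2 / (2 * σ ^ 2))) := by
    intro y
    rw [hdens]
    simp only
    rw [Finset.sum_sub_distrib, ← Finset.sum_div, ← Finset.sum_div]
  have hwd : μxδ = μx.withDensity dens := pi_gauss_shift hσ x δ
  set cthr : ℝ≥0∞ := ENNReal.ofReal (Real.exp (r / σ ^ 2 - N2 / (2 * σ ^ 2))) with hcthr
  have hσ2 : (0:ℝ) < σ ^ 2 := by positivity
  have h1 : ∀ y ∈ H, cthr ≤ dens y := by
    intro y hy
    rw [hdenseq y, hcthr]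
    apply ENNReal.ofReal_le_ofReal
    apply Real.exp_le_exp.mpr
    have hyr : r ≤ S y := hy
    gcongr
  have h2 : ∀ y ∉ H, dens y ≤ cthr := by
    intro y hy
    rw [hdenseq y, hcthr]
    apply ENNReal.ofReal_le_ofReal
    apply Real.exp_le_exp.mpr
    have hyr : S y ≤ r := by
      simp only [hH, Set.mem_preimage, Set.mem_Ici, not_le] at hy
      exact hy.le
    gcongr
  have key : μxδ A ≤ μxδ H := by
    rw [hwd, withDensity_apply _ hA, withDensity_apply _ hHmeas]
    exact np_core _ hA hHmeas hAle dens hdensmeas cthr h1 h2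
  have hS'' : S = (· + N2) ∘ (fun y => ∑ i, δ i * (y i - (x i + δ i))) := by
    funext y
    rw [hS, Function.comp_apply, hN2, ← Finset.sum_add_distrib]
    exact Finset.sum_congr rfl fun i _ => by ring
  have hmeas2 : Measurable (fun y : Fin d → ℝ => ∑ i, δ i * (y i - (x i + δ i))) :=
    Finset.measurable_sum _ fun i _ => by
      fun_prop
  have hmapS2 : μxδ.map S = gaussianReal N2 W := by
    have hbase : μxδ.map (fun y => ∑ i, δ i * (y i - (x i + δ i))) = gaussianReal 0 W :=
      map_shift_gauss hσ (fun i => x i + δ i) δ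
    rw [hS'', ← Measure.map_map (measurable_add_const N2) hmeas2, hbase,
      gaussianReal_map_add_const, zero_add]
  have hxδH : (μxδ H).toReal = Phi (t₀ + nδ / σ) := by
    rw [hH, ← Measure.map_apply hSmeas measurableSet_Ici, hmapS2,
      gaussianReal_Ici N2 hWne r, gaussianReal_Iic N2 hWne r, hsqrtW]
    have harg : (r - N2) / (nδ * σ) = -(t₀ + nδ / σ) := by
      rw [hr, ← hnδ2]
      field_simp
      ring
    rw [harg, Phi_neg]
    ring
  calc (μxδ A).toReal ≤ (μxδ H).toReal := ENNReal.toReal_mono (measure_ne_top _ _) key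
    _ = Phi (PhiInv q + nδ / σ) := by rw [hxδH, ht₀]

/-- Gaussian shift upper bound (dual of the lower bound): if `μ_x(A) ≤ q` then for every
shift `δ`, `μ_{x+δ}(A) ≤ Φ(Φ⁻¹(q) + ‖δ‖₂/σ)`. -/
theorem gaussian_shift_upper_bound
    {d : ℕ} {σ : ℝ} (hσ : 0 < σ)
    (A : Set (EuclideanSpace ℝ (Fin d))) (hA : MeasurableSet A)
    (x : EuclideanSpace ℝ (Fin d)) (q : ℝ) (hq : q ∈ Set.Ioo (0 : ℝ) 1)
    (h : (gaussPi d σ x A).toReal ≤ q) :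
    ∀ δ : EuclideanSpace ℝ (Fin d),
      (gaussPi d σ (x + δ) A).toReal ≤ Phi (PhiInv q + ‖δ‖ / σ) := by
  intro δ
  by_cases hδ : δ = 0
  · subst hδ
    rw [add_zero, norm_zero, zero_div, add_zero, Phi_PhiInv hq]
    exact h
  have hδnorm : 0 < ‖δ‖ := norm_pos_iff.mpr hδ
  have hnδ2 : ‖δ‖ ^ 2 = ∑ i, δ i ^ 2 := by
    rw [EuclideanSpace.norm_eq, Real.sq_sqrt (by positivity)]
    exact Finset.sum_congr rfl fun i _ => by rw [Real.norm_eq_abs, sq_abs]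
  have hmeasT : Measurable (WithLp.toLp 2 : (Fin d → ℝ) → EuclideanSpace ℝ (Fin d)) :=
    WithLp.measurable_toLp 2 _
  have hG : ∀ z : EuclideanSpace ℝ (Fin d), gaussPi d σ z A
      = (Measure.pi fun i => gaussianReal (z i) ⟨σ ^ 2, sq_nonneg σ⟩) (WithLp.toLp 2 ⁻¹' A) :=
    fun z => Measure.map_apply hmeasT hA
  rw [hG] at h ⊢
  exact aux_shift hσ _ (hmeasT hA) x q hq h δ ‖δ‖ hδnorm hnδ2
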